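/- Let V and W be finite-dimensional real vector spaces. Let the hypotheses of the GPT transformation setting hold: C_W ⊆ W is a closed, pointed, full-dimensional convex cone with a linear functional u_W ∈ W* satisfying u_W(s) > 0 for every nonzero s ∈ C_W, and there exists a normalized state μ ∈ interior(C_W) with u_W(μ) = 1; C_V ⊆ V* is a closed, pointed, full-dimensional convex cone with a distinguished element u_V lying in the topological interior of C_V. Then the set DP of discard-preserving linear maps equals the affine hull of the set PM of measure-and-prepare transformations: DP = Aff(PM). That is, every linear map φ : V → W with u_W ∘ φ = u_V can be written as an affine combination (real coefficients summing to 1) of measure-and-prepare transformations, and conversely every affine combination of measure-and-prepare transformations is discard-preserving. -/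

import Mathlib

/-- A nonempty closed convex cone contains `0`. -/
lemma aux_zero_mem_closed_cone {E : Type*} [NormedAddCommGroup E] [NormedSpace ℝ E]
    (C : ConvexCone ℝ E) (hC : IsClosed (C : Set E)) {x : E} (hx : x ∈ C) : (0 : E) ∈ C := by
  have htend : Filter.Tendsto (fun n : ℕ => (1 / ((n : ℝ) + 1)) • x) Filter.atTop (nhds 0) := by
    simpa using (tendsto_one_div_add_atTop_nhds_zero_nat :
      Filter.Tendsto (fun n : ℕ => 1 / ((n : ℝ) + 1)) Filter.atTop (nhds 0)).smul_const x
  exact hC.mem_of_tendsto htend (Filter.Eventually.of_forall fun n =>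
    C.smul_mem (by positivity) hx)

/-- Perturbations of an interior point stay in the set. -/
lemma aux_interior_perturb {E : Type*} [NormedAddCommGroup E] [NormedSpace ℝ E]
    {S : Set E} {u : E} (hu : u ∈ interior S) (f : E) :
    ∃ ε : ℝ, 0 < ε ∧ u + ε • f ∈ S ∧ u - ε • f ∈ S := by
  obtain ⟨r, hr, hball⟩ := Metric.isOpen_iff.mp isOpen_interior u hu
  refine ⟨r / (2 * (‖f‖ + 1)), by positivity, ?_, ?_⟩ <;>
  · refine interior_subset (hball ?_)
    rw [Metric.mem_ball]
    have h1 : ‖(r / (2 * (‖f‖ + 1))) • f‖ < r := by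
      rw [norm_smul, Real.norm_eq_abs, abs_of_pos (by positivity)]
      calc r / (2 * (‖f‖ + 1)) * ‖f‖ < r / (2 * (‖f‖ + 1)) * (‖f‖ + 1) := by
            apply mul_lt_mul_of_pos_left (by linarith) (by positivity)
        _ = r / 2 := by field_simp
        _ < r := by linarith
    simpa [dist_eq_norm] using h1

theorem dp_eq_affineSpan_pm
    {V W : Type*}
    [NormedAddCommGroup V] [NormedSpace ℝ V] [FiniteDimensional ℝ V]
    [NormedAddCommGroup W] [NormedSpace ℝ W] [FiniteDimensional ℝ W]
    -- the state cone `C_W ⊆ W`: closed, pointed, full-dimensional convex cone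
    (CW : ConvexCone ℝ W) (hCWclosed : IsClosed (CW : Set W))
    (hCWpointed : ∀ x ∈ CW, -x ∈ CW → x = 0)
    (hCWfull : Submodule.span ℝ (CW : Set W) = ⊤)
    -- the unit functional `u_W`, strictly positive on nonzero cone elements
    (uW : W →ₗ[ℝ] ℝ) (huW : ∀ s ∈ CW, s ≠ 0 → 0 < uW s)
    -- a normalized state `μ` interior to the state cone
    (μ : W) (hμ : μ ∈ interior (CW : Set W)) (hμ1 : uW μ = 1)
    -- the effect cone `C_V ⊆ V*`: closed, pointed, full-dimensional convex cone
    (CV : ConvexCone ℝ (V →L[ℝ] ℝ)) (hCVclosed : IsClosed (CV : Set (V →L[ℝ] ℝ)))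
    (hCVpointed : ∀ e ∈ CV, -e ∈ CV → e = 0)
    (hCVfull : Submodule.span ℝ (CV : Set (V →L[ℝ] ℝ)) = ⊤)
    -- the discarding effect `u_V`, interior to the effect cone
    (uV : V →L[ℝ] ℝ) (huV : uV ∈ interior (CV : Set (V →L[ℝ] ℝ))) :
    -- `DP = Aff(PM)`
    {φ : V →ₗ[ℝ] W | ∀ x, uW (φ x) = uV x} =
      (affineSpan ℝ
        {φ : V →ₗ[ℝ] W |
          ∃ (k : ℕ) (s : Fin k → W) (e : Fin k → (V →L[ℝ] ℝ)),
            (∀ i, s i ∈ CW ∧ uW (s i) = 1) ∧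
            (∀ i, e i ∈ CV ∧ uV - e i ∈ CV) ∧
            (∑ i, e i) = uV ∧
            (∀ x, φ x = ∑ i, e i x • s i)} : Set (V →ₗ[ℝ] W)) := by
  set PM : Set (V →ₗ[ℝ] W) :=
    {φ : V →ₗ[ℝ] W |
      ∃ (k : ℕ) (s : Fin k → W) (e : Fin k → (V →L[ℝ] ℝ)),
        (∀ i, s i ∈ CW ∧ uW (s i) = 1) ∧
        (∀ i, e i ∈ CV ∧ uV - e i ∈ CV) ∧
        (∑ i, e i) = uV ∧
        (∀ x, φ x = ∑ i, e i x • s i)} with hPM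
  have huVCV : uV ∈ CV := interior_subset huV
  have hμCW : μ ∈ CW := interior_subset hμ
  have h0CV : (0 : V →L[ℝ] ℝ) ∈ CV := aux_zero_mem_closed_cone CV hCVclosed huVCV
  -- the base measure-and-prepare map `φ₀ = uV ⊗ μ`
  set φ₀ : V →ₗ[ℝ] W := LinearMap.smulRight (uV : V →ₗ[ℝ] ℝ) μ with hφ₀def
  have hφ₀PM : φ₀ ∈ PM := by
    refine ⟨1, ![μ], ![uV], fun i => by fin_cases i; exact ⟨hμCW, hμ1⟩,
      fun i => by fin_cases i; exact ⟨huVCV, by simpa using h0CV⟩,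
      by simp, fun x => by simp [hφ₀def]⟩
  -- every rank-one map `f ⊗ w` with `uW w = 0` lies in the vector span of `PM`
  have key : ∀ (f : V →L[ℝ] ℝ) (w : W), uW w = 0 →
      LinearMap.smulRight (f : V →ₗ[ℝ] ℝ) w ∈ vectorSpan ℝ PM := by
    intro f w hw
    obtain ⟨ε, hε, hV1, hV2⟩ := aux_interior_perturb huV f
    obtain ⟨δ, hδ, hW1, hW2⟩ := aux_interior_perturb hμ w
    set e₁ : V →L[ℝ] ℝ := (2⁻¹ : ℝ) • (uV + ε • f) with he₁
    set e₂ : V →L[ℝ] ℝ := (2⁻¹ : ℝ) • (uV - ε • f) with he₂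
    set s₁ : W := μ + δ • w with hs₁
    set s₂ : W := μ - δ • w with hs₂
    have he₁CV : e₁ ∈ CV := CV.smul_mem (by norm_num) hV1
    have he₂CV : e₂ ∈ CV := CV.smul_mem (by norm_num) hV2
    have hsub1 : uV - e₁ = e₂ := by rw [he₁, he₂]; module
    have hsub2 : uV - e₂ = e₁ := by rw [he₁, he₂]; module
    have hsum : e₁ + e₂ = uV := by rw [he₁, he₂]; module
    have hs₁CW : s₁ ∈ CW := hW1
    have hs₂CW : s₂ ∈ CW := hW2
    have hus₁ : uW s₁ = 1 := by simp [hs₁, hμ1, hw]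
    have hus₂ : uW s₂ = 1 := by simp [hs₂, hμ1, hw]
    set φ₁ : V →ₗ[ℝ] W :=
      LinearMap.smulRight (e₁ : V →ₗ[ℝ] ℝ) s₁ + LinearMap.smulRight (e₂ : V →ₗ[ℝ] ℝ) s₂ with hφ₁
    set φ₂ : V →ₗ[ℝ] W :=
      LinearMap.smulRight (e₁ : V →ₗ[ℝ] ℝ) s₂ + LinearMap.smulRight (e₂ : V →ₗ[ℝ] ℝ) s₁ with hφ₂
    have hφ₁PM : φ₁ ∈ PM :=
      ⟨2, ![s₁, s₂], ![e₁, e₂], fun i => by fin_cases i <;> exact ⟨‹_›, ‹_›⟩,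
        fun i => by fin_cases i <;> simp [hsub1, hsub2, he₁CV, he₂CV],
        by simp [Fin.sum_univ_two, hsum], fun x => by simp [hφ₁, Fin.sum_univ_two]⟩
    have hφ₂PM : φ₂ ∈ PM :=
      ⟨2, ![s₂, s₁], ![e₁, e₂], fun i => by fin_cases i <;> exact ⟨‹_›, ‹_›⟩,
        fun i => by fin_cases i <;> simp [hsub1, hsub2, he₁CV, he₂CV],
        by simp [Fin.sum_univ_two, hsum], fun x => by simp [hφ₂, Fin.sum_univ_two]⟩
    have hdiff : φ₁ - φ₂ = (2 * ε * δ) • LinearMap.smulRight (f : V →ₗ[ℝ] ℝ) w := by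
      apply LinearMap.ext; intro x
      simp only [hφ₁, hφ₂, LinearMap.sub_apply, LinearMap.add_apply, LinearMap.smulRight_apply,
        LinearMap.smul_apply, ContinuousLinearMap.coe_coe, he₁, he₂, hs₁, hs₂,
        ContinuousLinearMap.smul_apply, ContinuousLinearMap.add_apply,
        ContinuousLinearMap.sub_apply, smul_eq_mul]
      module
    have hmem : φ₁ - φ₂ ∈ vectorSpan ℝ PM := vsub_mem_vectorSpan ℝ hφ₁PM hφ₂PM
    have : LinearMap.smulRight (f : V →ₗ[ℝ] ℝ) w = (2 * ε * δ)⁻¹ • (φ₁ - φ₂) := by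
      rw [hdiff, smul_smul, inv_mul_cancel₀ (by positivity), one_smul]
    rw [this]
    exact Submodule.smul_mem _ _ hmem
  ext φ
  constructor
  · -- hard direction: DP ⊆ Aff(PM)
    intro hφ
    simp only [Set.mem_setOf_eq] at hφ
    set ψ : V →ₗ[ℝ] W := φ - φ₀ with hψdef
    have hψ0 : ∀ x, uW (ψ x) = 0 := by
      intro x
      simp [hψdef, hφ x, hφ₀def, hμ1]
    set b := Module.finBasis ℝ V with hb
    have hdecomp : ψ = ∑ i, LinearMap.smulRight
        ((LinearMap.toContinuousLinearMap (b.coord i) : V →L[ℝ] ℝ) : V →ₗ[ℝ] ℝ) (ψ (b i)) := by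
      apply LinearMap.ext; intro x
      simp only [LinearMap.coe_sum, Finset.sum_apply, LinearMap.smulRight_apply,
        ContinuousLinearMap.coe_coe, LinearMap.coe_toContinuousLinearMap', Module.Basis.coord_apply]
      conv_lhs => rw [← b.sum_repr x]
      simp only [map_sum, map_smul]
    have hψmem : ψ ∈ vectorSpan ℝ PM := by
      rw [hdecomp]
      exact Submodule.sum_mem _ fun i _ => key _ _ (hψ0 (b i))
    have := AffineSubspace.vadd_mem_of_mem_direction
      (by rw [direction_affineSpan]; exact hψmem) (subset_affineSpan ℝ PM hφ₀PM)
    simpa [hψdef, vadd_eq_add, sub_add_cancel] using this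
  · -- easy direction: Aff(PM) ⊆ DP
    intro hφ
    set D : AffineSubspace ℝ (V →ₗ[ℝ] W) :=
      { carrier := {φ : V →ₗ[ℝ] W | ∀ x, uW (φ x) = uV x}
        smul_vsub_vadd_mem' := by
          intro c p₁ p₂ p₃ h₁ h₂ h₃
          intro x
          simp only [vsub_eq_sub, vadd_eq_add, LinearMap.add_apply, LinearMap.smul_apply,
            LinearMap.sub_apply, map_add, map_smul, map_sub, h₁ x, h₂ x, h₃ x, smul_eq_mul]
          ring } with hD
    have hPMD : PM ⊆ (D : Set (V →ₗ[ℝ] W)) := by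
      rintro χ ⟨k, s, e, hs, he, hsum, hχ⟩
      intro x
      have : uV x = ∑ i, e i x := by rw [← hsum]; simp
      rw [hχ x, map_sum, this]
      exact Finset.sum_congr rfl fun i _ => by rw [map_smul, smul_eq_mul, (hs i).2, mul_one]
    exact affineSpan_le.mpr hPMD hφ
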